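/- With the SRCA loss L(c,r,I) = ∑ᵢ [(xᵢ − c)ᵀ(xᵢ − c) + r² − 2r √((xᵢ − c)ᵀ I_I (xᵢ − c))], suppose c* is a critical point of c ↦ L(c,r,I) (with r fixed) at which the square roots are all nonzero. Then for every coordinate j ∉ I, the j-th coordinate of c* equals the sample mean: c*_j = (1/n) ∑ᵢ (xᵢ)_j. -/

import Mathlib

open RealInnerProductSpace in
/-- At a critical point of the SRCA loss in c (with r, I fixed) where all square
roots are nonzero, the coordinates of the center outside I equal the sample mean. -/
theorem stmt4 (d n : ℕ) (hn : 0 < n) (x : Fin n → EuclideanSpace ℝ (Fin d))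
    (I : Finset (Fin d)) (r : ℝ) (cstar : EuclideanSpace ℝ (Fin d))
    (hnz : ∀ i, (∑ j ∈ I, ((x i - cstar) j) ^ 2) ≠ 0)
    (hcrit : HasFDerivAt
      (fun c : EuclideanSpace ℝ (Fin d) =>
        ∑ i, (‖x i - c‖ ^ 2 + r ^ 2 -
          2 * r * Real.sqrt (∑ j ∈ I, ((x i - c) j) ^ 2)))
      (0 : EuclideanSpace ℝ (Fin d) →L[ℝ] ℝ) cstar) :
    ∀ j, j ∉ I → cstar j = (1 / n : ℝ) * ∑ i, x i j := by
  intro j hj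
  set E : EuclideanSpace ℝ (Fin d) := EuclideanSpace.single j (1:ℝ) with hE
  set f : EuclideanSpace ℝ (Fin d) → ℝ :=
    fun c => ∑ i, (‖x i - c‖ ^ 2 + r ^ 2 -
      2 * r * Real.sqrt (∑ j ∈ I, ((x i - c) j) ^ 2)) with hf
  have h0 : cstar + (0:ℝ) • E = cstar := by simp
  have hφ : HasDerivAt (fun t : ℝ => cstar + t • E) E 0 := by
    simpa using ((hasDerivAt_id (0:ℝ)).smul_const E).const_add cstar
  have hcrit' : HasFDerivAt f (0 : EuclideanSpace ℝ (Fin d) →L[ℝ] ℝ) (cstar + (0:ℝ) • E) := by rw [h0]; exact hcrit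
  have hcomp : HasDerivAt (fun t : ℝ => f (cstar + t • E)) 0 0 := by
    have h := hcrit'.comp_hasDerivAt 0 hφ
    simp only [ContinuousLinearMap.zero_apply] at h
    exact h
  set B : ℝ := -2 * ∑ i, (x i - cstar) j with hB
  have heq : (fun t : ℝ => f (cstar + t • E))
      = fun t : ℝ => f cstar + B * t + (n : ℝ) * t ^ 2 := by
    funext t
    have key : ∀ i, x i - (cstar + t • E) = (x i - cstar) - t • E := by
      intro i; abel
    have hnorm : ∀ i, ‖x i - (cstar + t • E)‖ ^ 2
        = ‖x i - cstar‖ ^ 2 - 2 * ((x i - cstar) j) * t + t ^ 2 := by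
      intro i
      rw [key i, norm_sub_sq_real, real_inner_smul_right]
      have h1 : ⟪x i - cstar, E⟫ = (x i - cstar) j := by
        rw [hE]
        simpa using EuclideanSpace.inner_single_right (𝕜 := ℝ) j 1 (x i - cstar)
      have h2 : ‖t • E‖ ^ 2 = t ^ 2 := by
        rw [norm_smul, hE, EuclideanSpace.norm_single]
        simp [mul_pow, sq_abs]
      rw [h1, h2]; ring
    have hsqrt : ∀ i, (∑ k ∈ I, ((x i - (cstar + t • E)) k) ^ 2)
        = ∑ k ∈ I, ((x i - cstar) k) ^ 2 := by
      intro i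
      refine Finset.sum_congr rfl fun k hk => ?_
      have hkj : k ≠ j := fun h => hj (h ▸ hk)
      have hek : ((x i - cstar) - t • E) k = (x i - cstar) k - t * E k := rfl
      rw [key i, hek, hE, EuclideanSpace.single_apply, if_neg hkj, mul_zero, sub_zero]
    rw [hf, hB]
    simp only [hnorm, hsqrt]
    have split : ∀ i : Fin n,
        ‖x i - cstar‖ ^ 2 - 2 * ((x i - cstar) j) * t + t ^ 2 + r ^ 2 -
          2 * r * Real.sqrt (∑ k ∈ I, ((x i - cstar) k) ^ 2)
        = (‖x i - cstar‖ ^ 2 + r ^ 2 -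
            2 * r * Real.sqrt (∑ k ∈ I, ((x i - cstar) k) ^ 2))
          + ((-2 * ((x i - cstar) j)) * t + t ^ 2) := by
      intro i; ring
    simp only [split]
    rw [Finset.sum_add_distrib, Finset.sum_add_distrib, Finset.sum_const,
      Finset.card_univ, Fintype.card_fin, nsmul_eq_mul, ← Finset.sum_mul,
      ← Finset.mul_sum]
    ring
  have hpoly : HasDerivAt (fun t : ℝ => f cstar + B * t + (n : ℝ) * t ^ 2)
      (B + (n : ℝ) * (2 * 0)) 0 := by
    have h1 : HasDerivAt (fun t : ℝ => B * t) B 0 := by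
      simpa using (hasDerivAt_id (0:ℝ)).const_mul B
    have h2 : HasDerivAt (fun t : ℝ => (n : ℝ) * t ^ 2) ((n : ℝ) * (2 * 0)) 0 := by
      simpa using ((hasDerivAt_pow 2 (0:ℝ))).const_mul (n : ℝ)
    exact (h1.const_add (f cstar)).add h2
  have hB0 : B = 0 := by
    have := hpoly.unique (heq ▸ hcomp)
    simpa using this
  rw [hB] at hB0
  have hsumv : ∑ i, (x i - cstar) j = 0 := by linarith
  have hsum : ∑ i, ((x i) j - cstar j) = 0 := by
    simpa [PiLp.sub_apply] using hsumv
  rw [Finset.sum_sub_distrib, Finset.sum_const, Finset.card_univ,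
    Fintype.card_fin, nsmul_eq_mul, sub_eq_zero] at hsum
  have hn' : (n : ℝ) ≠ 0 := Nat.cast_ne_zero.mpr hn.ne'
  field_simp
  linarith [hsum]
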